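/- arXiv:2402.06195 — 5 statements merged into one kernel-verified Lean document; each statement's English description precedes it below -/
import Mathlib

section
/- Let G be a connected finite simple graph with nonempty vertex set V, and let s : V → ℝ satisfy Σ_{i∈V} s(i) ≤ 0. Then there exists z : V → ℝ such that s(i) + Σ_{j∈N(i)} (z(i) − z(j)) ≤ 0 for every i ∈ V. -/
open Finset Matrix

/-- Existence direction of Proposition 1: if `Σ_{i∈V} s i ≤ 0` on a connected
finite simple graph, then there exist constraint-mismatch variables `z`
making every local decoupled constraint `s i + Σ_{j∈N(i)} (z i − z j) ≤ 0`
feasible. -/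
theorem exists_mismatch_vars_of_coupled_constraint {V : Type*} [Fintype V]
    [Nonempty V] (G : SimpleGraph V) [DecidableRel G.Adj] (hG : G.Connected)
    (s : V → ℝ) (hs : ∑ i : V, s i ≤ 0) :
    ∃ z : V → ℝ, ∀ i : V, s i + ∑ j ∈ G.neighborFinset i, (z i - z j) ≤ 0 := by
  classical
  set n : ℕ := Fintype.card V with hn
  have hn0 : 0 < n := Fintype.card_pos
  -- the sum functional
  let f : (V → ℝ) →ₗ[ℝ] ℝ :=
    { toFun := fun x => ∑ i : V, x i
      map_add' := by intro x y; simp [Finset.sum_add_distrib]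
      map_smul' := by intro c x; simp [Finset.mul_sum] }
  let L := Matrix.toLin' (G.lapMatrix ℝ)
  -- range L ≤ ker f
  have hle : LinearMap.range L ≤ LinearMap.ker f := by
    rintro _ ⟨z, rfl⟩
    simp only [LinearMap.mem_ker, f, LinearMap.coe_mk, AddHom.coe_mk]
    have : ∀ i, (L z) i = G.degree i * z i - ∑ u ∈ G.neighborFinset i, z u := by
      intro i
      rw [show L z = G.lapMatrix ℝ *ᵥ z from Matrix.toLin'_apply _ _]
      exact G.lapMatrix_mulVec_apply i z
    simp_rw [this, Finset.sum_sub_distrib]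
    have : ∑ i : V, ∑ u ∈ G.neighborFinset i, z u = ∑ i : V, (G.degree i : ℝ) * z i := by
      have h1 : ∀ i : V, ∑ u ∈ G.neighborFinset i, z u
          = ∑ u : V, if G.Adj i u then z u else 0 := by
        intro i
        rw [SimpleGraph.neighborFinset_eq_filter, Finset.sum_filter]
      simp_rw [h1]
      rw [Finset.sum_comm]
      congr 1; ext u
      rw [SimpleGraph.degree_eq_sum_if_adj, Finset.sum_mul]
      congr 1; ext i
      simp [G.adj_comm u i]
    rw [this, sub_self]
  -- dimension of ker f is n - 1
  have hfsurj : LinearMap.range f = ⊤ := by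
    rw [LinearMap.range_eq_top]
    intro c
    obtain ⟨v⟩ := ‹Nonempty V›
    refine ⟨fun i => if i = v then c else 0, ?_⟩
    simp [f]
  have hkerf : Module.finrank ℝ (LinearMap.ker f) = n - 1 := by
    have h := LinearMap.finrank_range_add_finrank_ker f
    rw [hfsurj, finrank_top, Module.finrank_self] at h
    have : Module.finrank ℝ (V → ℝ) = n := by
      simp [Module.finrank_pi, hn]
    omega
  -- dimension of ker L is 1
  have hkerL : Module.finrank ℝ (LinearMap.ker L) = 1 := by
    rw [← G.card_connectedComponent_eq_finrank_ker_toLin'_lapMatrix]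
    have : Subsingleton G.ConnectedComponent := hG.preconnected.subsingleton_connectedComponent
    have : Nonempty G.ConnectedComponent := Nonempty.map G.connectedComponentMk ‹_›
    exact Fintype.card_eq_one_iff.mpr ⟨Classical.arbitrary _, fun y => Subsingleton.elim _ _⟩
  have hrangeL : Module.finrank ℝ (LinearMap.range L) = n - 1 := by
    have h := LinearMap.finrank_range_add_finrank_ker L
    have : Module.finrank ℝ (V → ℝ) = n := by simp [Module.finrank_pi, hn]
    omega
  have heq : LinearMap.range L = LinearMap.ker f :=
    Submodule.eq_of_le_of_finrank_le hle (le_of_eq (hkerf.trans hrangeL.symm))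
  -- target vector
  set t : V → ℝ := fun i => (∑ j : V, s j) / n - s i with ht
  have htmem : t ∈ LinearMap.ker f := by
    simp only [LinearMap.mem_ker, f, LinearMap.coe_mk, AddHom.coe_mk, ht,
      Finset.sum_sub_distrib, Finset.sum_const, Finset.card_univ]
    rw [nsmul_eq_mul]
    field_simp
    rw [← hn]; ring
  rw [← heq] at htmem
  obtain ⟨z, hz⟩ := htmem
  refine ⟨z, fun i => ?_⟩
  have hLz : ∑ j ∈ G.neighborFinset i, (z i - z j) = t i := by
    rw [Finset.sum_sub_distrib, Finset.sum_const, ← hz]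
    rw [show L z = G.lapMatrix ℝ *ᵥ z from Matrix.toLin'_apply _ _]
    rw [G.lapMatrix_mulVec_apply i z, SimpleGraph.degree, nsmul_eq_mul]
  rw [hLz, ht]
  have : s i + ((∑ j : V, s j) / n - s i) = (∑ j : V, s j) / n := by ring
  rw [this]
  exact div_nonpos_of_nonpos_of_nonneg hs (Nat.cast_nonneg n)
end

section
/- Let G be a finite simple graph with vertex set V, let p be a positive integer, and for each k ∈ {1,…,p} let W_k ⊆ V be a nonempty vertex subset whose induced subgraph in G is connected, and let g_i^k : ℝ^m → ℝ be a function for each i ∈ W_k. Define A := { u : V → ℝ^m : for all k, Σ_{i∈W_k} g_i^k(u(i)) ≤ 0 } and B := { (u, z) : for all k and all i ∈ W_k, g_i^k(u(i)) + Σ_{j∈N(i)∩W_k} (z(i,k) − z(j,k)) ≤ 0 }, where z assigns a real number z(i,k) to each pair (i,k) with i ∈ W_k. Then the projection of B onto the u-coordinates equals A. -/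
open Finset Matrix

/-- Antisymmetric double sum over edges vanishes. -/
lemma sum_adj_sub_eq_zero {α : Type*} [Fintype α] [DecidableEq α]
    (H : SimpleGraph α) [DecidableRel H.Adj] (s : Finset α) (z : α → ℝ) :
    ∑ i ∈ s, ∑ j ∈ H.neighborFinset i ∩ s, (z i - z j) = 0 := by
  have hrw : ∀ i, H.neighborFinset i ∩ s = s.filter (fun j => H.Adj i j) := by
    intro i; ext j
    simp [SimpleGraph.mem_neighborFinset, and_comm]
  have hS : ∑ i ∈ s, ∑ j ∈ s, (if H.Adj i j then z i - z j else 0)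
      = 0 := by
    have h2 : ∑ i ∈ s, ∑ j ∈ s, (if H.Adj i j then z i - z j else 0)
        = ∑ i ∈ s, ∑ j ∈ s, (if H.Adj j i then z j - z i else 0) :=
      Finset.sum_comm
    have h3 : ∑ i ∈ s, ∑ j ∈ s,
        ((if H.Adj i j then z i - z j else 0) + (if H.Adj j i then z j - z i else 0)) = 0 := by
      refine Finset.sum_eq_zero fun i _ => Finset.sum_eq_zero fun j _ => ?_
      by_cases h : H.Adj i j
      · rw [if_pos h, if_pos (H.adj_symm h)]; ring
      · rw [if_neg h, if_neg (fun h' => h (H.adj_symm h'))]; ring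
    have h4 : ∑ i ∈ s, ∑ j ∈ s,
        ((if H.Adj i j then z i - z j else 0) + (if H.Adj j i then z j - z i else 0))
        = (∑ i ∈ s, ∑ j ∈ s, (if H.Adj i j then z i - z j else 0))
          + ∑ i ∈ s, ∑ j ∈ s, (if H.Adj j i then z j - z i else 0) := by
      rw [← Finset.sum_add_distrib]
      exact Finset.sum_congr rfl fun i _ => Finset.sum_add_distrib
    linarith
  calc ∑ i ∈ s, ∑ j ∈ H.neighborFinset i ∩ s, (z i - z j)
      = ∑ i ∈ s, ∑ j ∈ s, (if H.Adj i j then z i - z j else 0) := by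
        refine Finset.sum_congr rfl fun i _ => ?_
        rw [hrw i, Finset.sum_filter]
    _ = 0 := hS

/-- On a connected finite graph, any vector with nonpositive total sum can be
decoupled via mismatch variables. -/
lemma exists_mismatch {α : Type*} [Fintype α] [DecidableEq α]
    (H : SimpleGraph α) [DecidableRel H.Adj] (hconn : H.Connected)
    (a : α → ℝ) (ha : ∑ i, a i ≤ 0) :
    ∃ z : α → ℝ, ∀ i, a i + ∑ j ∈ H.neighborFinset i, (z i - z j) ≤ 0 := by
  classical
  have hne : Nonempty α := hconn.nonempty
  set n := Fintype.card α with hn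
  have hnpos : 0 < n := Fintype.card_pos
  -- the sum functional
  let φ : (α → ℝ) →ₗ[ℝ] ℝ :=
    { toFun := fun x => ∑ i, x i
      map_add' := fun x y => by simp [Finset.sum_add_distrib]
      map_smul' := fun c x => by simp [Finset.mul_sum] }
  let L := Matrix.toLin' (H.lapMatrix ℝ)
  -- laplacian image sums to zero
  have hLsum : ∀ zv : α → ℝ, ∑ i, (L zv) i = 0 := by
    intro zv
    have : ∀ i, (L zv) i = ∑ j ∈ H.neighborFinset i, (zv i - zv j) := by
      intro i
      rw [show (L zv) = (H.lapMatrix ℝ) *ᵥ zv from Matrix.toLin'_apply _ _,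
        SimpleGraph.lapMatrix_mulVec_apply]
      rw [Finset.sum_sub_distrib, Finset.sum_const, nsmul_eq_mul,
        ← SimpleGraph.card_neighborFinset_eq_degree]
    simp_rw [this]
    have := sum_adj_sub_eq_zero H Finset.univ zv
    simpa using this
  have hle : LinearMap.range L ≤ LinearMap.ker φ := by
    rintro x ⟨zv, rfl⟩
    exact hLsum zv
  -- dimensions
  have hkerL : Module.finrank ℝ (LinearMap.ker L) = 1 := by
    have hcc : Fintype.card H.ConnectedComponent = 1 := by
      rw [Fintype.card_eq_one_iff]
      obtain ⟨v⟩ := hne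
      refine ⟨H.connectedComponentMk v, ?_⟩
      refine SimpleGraph.ConnectedComponent.ind (fun w => ?_)
      exact SimpleGraph.ConnectedComponent.sound (hconn.preconnected w v)
    rw [← hcc, SimpleGraph.card_connectedComponent_eq_finrank_ker_toLin'_lapMatrix]
  have hpi : Module.finrank ℝ (α → ℝ) = n := by
    simp [Module.finrank_pi, hn]
  have hφsurj : LinearMap.range φ = ⊤ := by
    rw [LinearMap.range_eq_top]
    intro r
    refine ⟨fun _ => r / n, ?_⟩
    show ∑ _i : α, (r / n) = r
    rw [Finset.sum_const, nsmul_eq_mul]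
    field_simp
    rw [Finset.card_univ, ← hn]; ring
  have hkerφ : Module.finrank ℝ (LinearMap.ker φ) = n - 1 := by
    have h1 := LinearMap.finrank_range_add_finrank_ker φ
    rw [hpi, hφsurj] at h1
    simp [Module.finrank_self] at h1
    omega
  have hrangeL : Module.finrank ℝ (LinearMap.range L) = n - 1 := by
    have h1 := LinearMap.finrank_range_add_finrank_ker L
    rw [hpi, hkerL] at h1
    omega
  have heq : LinearMap.range L = LinearMap.ker φ :=
    Submodule.eq_of_le_of_finrank_eq hle (by rw [hrangeL, hkerφ])
  -- build the target vector
  set c : ℝ := (∑ i, a i) / n with hc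
  have hcle : c ≤ 0 := div_nonpos_of_nonpos_of_nonneg ha (by positivity)
  have hx : (fun i => c - a i) ∈ LinearMap.ker φ := by
    show ∑ i, (c - a i) = 0
    rw [Finset.sum_sub_distrib, Finset.sum_const, nsmul_eq_mul, hc]
    have : (n : ℝ) ≠ 0 := by positivity
    field_simp
    rw [Finset.card_univ, ← hn]; ring
  rw [← heq] at hx
  obtain ⟨zv, hzv⟩ := hx
  refine ⟨zv, fun i => ?_⟩
  have hLi : (L zv) i = ∑ j ∈ H.neighborFinset i, (zv i - zv j) := by
    rw [show (L zv) = (H.lapMatrix ℝ) *ᵥ zv from Matrix.toLin'_apply _ _,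
      SimpleGraph.lapMatrix_mulVec_apply]
    rw [Finset.sum_sub_distrib, Finset.sum_const, nsmul_eq_mul,
      ← SimpleGraph.card_neighborFinset_eq_degree]
  have : (L zv) i = c - a i := by rw [hzv]
  rw [hLi] at this
  rw [this]
  linarith

/-- Equivalence of feasible sets: the projection of the feasible set `B` of the
decoupled reformulation (with one constraint-mismatch variable `z i k` per
agent `i` and constraint `k` involving it) onto the `u`-coordinates equals the
feasible set `A` of the coupled network optimization problem. -/
theorem proj_decoupled_feasible_set_eq_coupled {V : Type*} [Fintype V]
    [DecidableEq V] (G : SimpleGraph V) [DecidableRel G.Adj] {m : ℕ}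
    (p : ℕ) (hp : 0 < p) (W : Fin p → Finset V)
    (hW : ∀ k, (W k).Nonempty)
    (hWconn : ∀ k, (G.induce ((W k : Set V))).Connected)
    (g : Fin p → V → (Fin m → ℝ) → ℝ)
    (A : Set (V → Fin m → ℝ))
    (hA : A = {u : V → Fin m → ℝ | ∀ k : Fin p, ∑ i ∈ W k, g k i (u i) ≤ 0})
    (B : Set ((V → Fin m → ℝ) × (V → Fin p → ℝ)))
    (hB : B = {uz : (V → Fin m → ℝ) × (V → Fin p → ℝ) |
      ∀ k : Fin p, ∀ i ∈ W k,
        g k i (uz.1 i) +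
          ∑ j ∈ G.neighborFinset i ∩ W k, (uz.2 i k - uz.2 j k) ≤ 0}) :
    Prod.fst '' B = A := by
  classical
  subst hA hB
  ext u
  simp only [Set.mem_image, Set.mem_setOf_eq]
  constructor
  · rintro ⟨⟨u', z⟩, huz, rfl⟩
    intro k
    have hsum : ∑ i ∈ W k,
        (g k i (u' i) + ∑ j ∈ G.neighborFinset i ∩ W k, (z i k - z j k)) ≤ 0 :=
      Finset.sum_nonpos fun i hi => huz k i hi
    rw [Finset.sum_add_distrib, sum_adj_sub_eq_zero G (W k) (fun v => z v k)] at hsum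
    simpa using hsum
  · intro hu
    -- for each k, build the mismatch variables on the induced subgraph
    have hz : ∀ k : Fin p, ∃ z : ((W k : Set V)) → ℝ,
        ∀ i : ((W k : Set V)),
          g k i (u i) + ∑ j ∈ (G.induce ((W k : Set V))).neighborFinset i,
            (z i - z j) ≤ 0 := by
      intro k
      refine exists_mismatch (G.induce ((W k : Set V))) (hWconn k)
        (fun i => g k i (u i)) ?_
      have : ∑ i : ((W k : Set V)), g k (i : V) (u i) = ∑ i ∈ W k, g k i (u i) :=
        Finset.sum_finset_coe (fun i => g k i (u i)) (W k)
      rw [this]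
      exact hu k
    choose zf hzf using hz
    refine ⟨⟨u, fun i k => if h : i ∈ W k then zf k ⟨i, by simpa using h⟩ else 0⟩,
      fun k i hi => ?_, rfl⟩
    have hi' : (i : V) ∈ ((W k : Set V)) := by simp [hi]
    have hkey := hzf k ⟨i, hi'⟩
    -- translate the sum over the induced neighborhood
    have hmap : ((G.induce ((W k : Set V))).neighborFinset ⟨i, hi'⟩).map
        ⟨Subtype.val, Subtype.val_injective⟩ = G.neighborFinset i ∩ W k := by
      ext j
      simp only [Finset.mem_map, SimpleGraph.mem_neighborFinset, Finset.mem_inter,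
        Function.Embedding.coeFn_mk, SimpleGraph.comap_adj, Function.Embedding.coe_subtype]
      constructor
      · rintro ⟨⟨j', hj'⟩, hadj, rfl⟩
        exact ⟨hadj, by simpa using hj'⟩
      · rintro ⟨hadj, hjW⟩
        exact ⟨⟨j, by simpa using hjW⟩, hadj, rfl⟩
    have hsum_eq : ∑ j ∈ G.neighborFinset i ∩ W k,
        ((if h : i ∈ W k then zf k ⟨i, by simpa using h⟩ else 0)
          - (if h : j ∈ W k then zf k ⟨j, by simpa using h⟩ else 0))
        = ∑ j ∈ (G.induce ((W k : Set V))).neighborFinset ⟨i, hi'⟩,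
            (zf k ⟨i, hi'⟩ - zf k j) := by
      rw [← hmap, Finset.sum_map]
      refine Finset.sum_congr rfl fun j' hj' => ?_
      have hjW : (j' : V) ∈ W k := by simpa using j'.2
      simp only [Function.Embedding.coeFn_mk]
      rw [dif_pos hi, dif_pos hjW]
    dsimp only
    rw [hsum_eq]
    exact hkey
end

section
/- Let G be a finite simple graph with vertex set V, let p be a positive integer, and for each k ∈ {1,…,p} let W_k ⊆ V be a nonempty vertex subset whose induced subgraph in G is connected, and let g_i^k : ℝ^m → ℝ be a function for each i ∈ W_k. Define A := { u : V → ℝ^m : for all k, Σ_{i∈W_k} g_i^k(u(i)) ≤ 0 } and B := { (u, z) : for all k and all i ∈ W_k, g_i^k(u(i)) + Σ_{j∈N(i)∩W_k} (z(i,k) − z(j,k)) ≤ 0 }, where z assigns a real number z(i,k) to each pair (i,k) with i ∈ W_k. Let f_i : ℝ^m → ℝ for each i ∈ V and set F(u) := Σ_{i∈V} f_i(u(i)). Then the projection onto the u-coordinates of the set of minimizers of (u,z) ↦ F(u) over B equals the set of minimizers of F over A. -/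
open Finset Matrix

/-- For a connected graph, the Laplacian surjects onto the sum-zero vectors. -/
lemma lap_surj {α : Type*} [Fintype α] [DecidableEq α] (H : SimpleGraph α)
    [DecidableRel H.Adj] (hconn : H.Connected) (c : α → ℝ) (hc : ∑ i, c i = 0) :
    ∃ z : α → ℝ, (H.lapMatrix ℝ) *ᵥ z = c := by
  have hne : Nonempty α := hconn.nonempty
  set L := Matrix.toLin' (H.lapMatrix ℝ) with hL
  have hker : LinearMap.ker L = Submodule.span ℝ {(fun _ => 1 : α → ℝ)} := by
    ext x
    rw [LinearMap.mem_ker, Submodule.mem_span_singleton]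
    rw [hL, Matrix.toLin'_apply, SimpleGraph.lapMatrix_mulVec_eq_zero_iff_forall_reachable]
    constructor
    · intro h
      obtain ⟨i₀⟩ := hne
      refine ⟨x i₀, funext fun j => ?_⟩
      simp [h j i₀ (hconn j i₀)]
    · rintro ⟨a, rfl⟩ i j _
      simp
  have h1ne : (fun _ => 1 : α → ℝ) ≠ 0 := by
    obtain ⟨i₀⟩ := hne
    intro h
    exact one_ne_zero (congrFun h i₀)
  have hkerdim : Module.finrank ℝ (LinearMap.ker L) = 1 := by
    rw [hker, finrank_span_singleton h1ne]
  let φ : (α → ℝ) →ₗ[ℝ] ℝ := ∑ i : α, LinearMap.proj i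
  have hφ : ∀ x : α → ℝ, φ x = ∑ i, x i := by
    intro x; simp [φ]
  have hφsurj : Function.Surjective φ := by
    intro r
    obtain ⟨i₀⟩ := hne
    refine ⟨Pi.single i₀ r, ?_⟩
    rw [hφ]
    simp
  have hrange : LinearMap.range L ≤ LinearMap.ker φ := by
    rintro _ ⟨z, rfl⟩
    rw [LinearMap.mem_ker, hφ]
    have hcol : ∀ j, ∑ i, H.lapMatrix ℝ i j = 0 := by
      intro j
      have h0 := congrFun (H.lapMatrix_mulVec_const_eq_zero (R := ℝ)) j
      have hrow : ∑ i, H.lapMatrix ℝ j i = 0 := by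
        simpa [Matrix.mulVec, dotProduct] using h0
      calc ∑ i, H.lapMatrix ℝ i j = ∑ i, H.lapMatrix ℝ j i :=
            Finset.sum_congr rfl fun i _ => ((H.isSymm_lapMatrix (R := ℝ)).apply i j).symm
        _ = 0 := hrow
    have : ∀ i, L z i = ∑ j, H.lapMatrix ℝ i j * z j := by
      intro i
      rw [hL, Matrix.toLin'_apply]
      simp [Matrix.mulVec, dotProduct]
    rw [Finset.sum_congr rfl fun i _ => this i, Finset.sum_comm]
    simp [← Finset.sum_mul, hcol]
  have hd1 : Module.finrank ℝ (LinearMap.ker φ) + 1 = Fintype.card α := by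
    have := LinearMap.finrank_range_add_finrank_ker φ
    rw [LinearMap.range_eq_top.mpr hφsurj] at this
    simpa [Module.finrank_self, add_comm] using this
  have hd2 : Module.finrank ℝ (LinearMap.range L) + 1 = Fintype.card α := by
    have := LinearMap.finrank_range_add_finrank_ker L
    rw [hkerdim] at this
    simpa using this
  have heq : LinearMap.range L = LinearMap.ker φ :=
    Submodule.eq_of_le_of_finrank_le hrange (by omega)
  have hc' : c ∈ LinearMap.range L := by
    rw [heq, LinearMap.mem_ker, hφ]; exact hc
  obtain ⟨z, hz⟩ := hc'
  exact ⟨z, by rw [← hz, hL, Matrix.toLin'_apply]⟩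

lemma lap_mulVec_eq_sum_sub {α : Type*} [Fintype α] [DecidableEq α] (H : SimpleGraph α)
    [DecidableRel H.Adj] (z : α → ℝ) (v : α) :
    (H.lapMatrix ℝ *ᵥ z) v = ∑ u ∈ H.neighborFinset v, (z v - z u) := by
  have h := H.lapMatrix_mulVec_apply (R := ℝ) v z
  rw [h, Finset.sum_sub_distrib, Finset.sum_const]
  rw [SimpleGraph.degree, nsmul_eq_mul]

/-- Proposition 1 (equivalence between the two optimization formulations):
minimizing the separable objective `F u = Σ_{i∈V} f i (u i)` over the decoupled
feasible set `B` and projecting onto the `u`-coordinates recovers exactly the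
minimizers of `F` over the coupled feasible set `A`. -/
theorem proj_decoupled_minimizers_eq_coupled_minimizers {V : Type*} [Fintype V]
    [DecidableEq V] (G : SimpleGraph V) [DecidableRel G.Adj] {m : ℕ}
    (p : ℕ) (hp : 0 < p) (W : Fin p → Finset V)
    (hW : ∀ k, (W k).Nonempty)
    (hWconn : ∀ k, (G.induce ((W k : Set V))).Connected)
    (g : Fin p → V → (Fin m → ℝ) → ℝ)
    (A : Set (V → Fin m → ℝ))
    (hA : A = {u : V → Fin m → ℝ | ∀ k : Fin p, ∑ i ∈ W k, g k i (u i) ≤ 0})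
    (B : Set ((V → Fin m → ℝ) × (V → Fin p → ℝ)))
    (hB : B = {uz : (V → Fin m → ℝ) × (V → Fin p → ℝ) |
      ∀ k : Fin p, ∀ i ∈ W k,
        g k i (uz.1 i) +
          ∑ j ∈ G.neighborFinset i ∩ W k, (uz.2 i k - uz.2 j k) ≤ 0})
    (f : V → (Fin m → ℝ) → ℝ) (F : (V → Fin m → ℝ) → ℝ)
    (hF : F = fun u => ∑ i : V, f i (u i)) :
    Prod.fst '' {uz ∈ B | ∀ vz ∈ B, F uz.1 ≤ F vz.1} =
      {u ∈ A | ∀ v ∈ A, F u ≤ F v} := by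
  subst hA hB
  -- Step 1: feasibility transfers from B to A.
  have hBA : ∀ uz : (V → Fin m → ℝ) × (V → Fin p → ℝ),
      (∀ k : Fin p, ∀ i ∈ W k,
        g k i (uz.1 i) + ∑ j ∈ G.neighborFinset i ∩ W k, (uz.2 i k - uz.2 j k) ≤ 0) →
      ∀ k : Fin p, ∑ i ∈ W k, g k i (uz.1 i) ≤ 0 := by
    rintro ⟨u, z⟩ h k
    -- the telescoping sum vanishes
    have hzero : ∑ i ∈ W k, ∑ j ∈ G.neighborFinset i ∩ W k, (z i k - z j k) = 0 := by
      have hrw : ∀ i, ∑ j ∈ G.neighborFinset i ∩ W k, (z i k - z j k)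
          = ∑ j ∈ W k, if G.Adj i j then z i k - z j k else 0 := by
        intro i
        rw [← Finset.sum_filter]
        apply Finset.sum_congr _ (fun _ _ => rfl)
        ext j
        simp [and_comm]
      rw [Finset.sum_congr rfl fun i _ => hrw i]
      have hS : ∑ i ∈ W k, ∑ j ∈ W k, (if G.Adj i j then z i k - z j k else 0)
          = -∑ i ∈ W k, ∑ j ∈ W k, (if G.Adj i j then z i k - z j k else 0) := by
        conv_lhs => rw [Finset.sum_comm]
        rw [← Finset.sum_neg_distrib]
        apply Finset.sum_congr rfl
        intro i _
        rw [← Finset.sum_neg_distrib]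
        apply Finset.sum_congr rfl
        intro j _
        by_cases hadj : G.Adj i j
        · simp [hadj, hadj.symm]
        · rw [if_neg hadj, if_neg (fun h : G.Adj j i => hadj h.symm), neg_zero]
      linarith
    calc ∑ i ∈ W k, g k i (u i)
        = ∑ i ∈ W k, (g k i (u i) + ∑ j ∈ G.neighborFinset i ∩ W k, (z i k - z j k)) := by
          rw [Finset.sum_add_distrib, hzero, add_zero]
      _ ≤ 0 := Finset.sum_nonpos fun i hi => h k i hi
  -- Step 2: every u ∈ A admits z with (u, z) ∈ B.
  have hAB : ∀ u : V → Fin m → ℝ, (∀ k : Fin p, ∑ i ∈ W k, g k i (u i) ≤ 0) →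
      ∃ z : V → Fin p → ℝ, ∀ k : Fin p, ∀ i ∈ W k,
        g k i (u i) + ∑ j ∈ G.neighborFinset i ∩ W k, (z i k - z j k) ≤ 0 := by
    intro u hu
    have key : ∀ k : Fin p, ∃ zk : V → ℝ, ∀ i ∈ W k,
        g k i (u i) + ∑ j ∈ G.neighborFinset i ∩ W k, (zk i - zk j) ≤ 0 := by
      intro k
      set H : SimpleGraph ((W k : Set V)) := G.induce ((W k : Set V)) with hH
      haveI : DecidableRel H.Adj := fun a b => Classical.dec _
      set sT : ℝ := ∑ i ∈ W k, g k i (u i) with hsT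
      have hsT0 : sT ≤ 0 := hu k
      set n : ℕ := (W k).card with hn
      have hn0 : 0 < n := Finset.card_pos.mpr (hW k)
      set c : ((W k : Set V)) → ℝ := fun v => -(g k v (u v)) + sT / n with hcdef
      have hmemiff : ∀ x : V, x ∈ W k ↔ x ∈ (W k : Set V) := fun x => by simp
      have hc : ∑ v, c v = 0 := by
        rw [← Finset.sum_subtype (W k) hmemiff (fun x => -(g k x (u x)) + sT / n)]
        rw [Finset.sum_add_distrib, Finset.sum_neg_distrib, Finset.sum_const, ← hsT, ← hn]
        have : (n : ℝ) ≠ 0 := Nat.cast_ne_zero.mpr hn0.ne'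
        field_simp
        rw [nsmul_eq_mul, mul_div_assoc', mul_div_cancel_left₀ _ this]; ring
      obtain ⟨w, hw⟩ := lap_surj H (hWconn k) c hc
      refine ⟨fun i => if h : i ∈ W k then w ⟨i, (hmemiff i).mp h⟩ else 0, ?_⟩
      intro i hi
      set zk : V → ℝ := fun i => if h : i ∈ W k then w ⟨i, (hmemiff i).mp h⟩ else 0 with hzk
      set v : ((W k : Set V)) := ⟨i, (hmemiff i).mp hi⟩ with hv
      have hzkw : ∀ (j : V) (hj : j ∈ W k), zk j = w ⟨j, (hmemiff j).mp hj⟩ :=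
        fun j hj => dif_pos hj
      have hsum : ∑ j ∈ G.neighborFinset i ∩ W k, (zk i - zk j) = (H.lapMatrix ℝ *ᵥ w) v := by
        rw [lap_mulVec_eq_sum_sub]
        have hrhs : ∑ u' ∈ H.neighborFinset v, (w v - w u')
            = ∑ u' : ((W k : Set V)), if G.Adj i u' then w v - w u' else 0 := by
          rw [← Finset.sum_filter]
          apply Finset.sum_congr _ (fun _ _ => rfl)
          ext u'
          simp [SimpleGraph.mem_neighborFinset, hH, hv, SimpleGraph.comap_adj,
            Function.Embedding.coe_subtype]
        have hlhs : ∑ j ∈ G.neighborFinset i ∩ W k, (zk i - zk j)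
            = ∑ u' : ((W k : Set V)), if G.Adj i u' then w v - w u' else 0 := by
          calc ∑ j ∈ G.neighborFinset i ∩ W k, (zk i - zk j)
              = ∑ j ∈ W k, if G.Adj i j then zk i - zk j else 0 := by
                rw [← Finset.sum_filter]
                apply Finset.sum_congr _ (fun _ _ => rfl)
                ext j; simp [and_comm]
            _ = ∑ u' : ((W k : Set V)), if G.Adj i u' then zk i - zk u' else 0 :=
                Finset.sum_subtype (W k) hmemiff (fun j => if G.Adj i j then zk i - zk j else 0)
            _ = ∑ u' : ((W k : Set V)), if G.Adj i u' then w v - w u' else 0 := by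
                apply Finset.sum_congr rfl
                intro u' _
                by_cases h : G.Adj i u'
                · rw [if_pos h, if_pos h, hzkw i hi, hzkw u' ((hmemiff _).mpr u'.2)]
                · rw [if_neg h, if_neg h]
        rw [hrhs]
        exact hlhs
      rw [hsum, congrFun hw v]
      have hceq : g k i (u i) + c v = sT / n := by
        show g k i (u i) + (-(g k i (u i)) + sT / n) = sT / n
        ring
      rw [hceq]
      exact div_nonpos_iff.mpr (Or.inr ⟨hsT0, Nat.cast_nonneg n⟩)
    choose zk hzk using key
    exact ⟨fun i k => zk k i, fun k i hi => hzk k i hi⟩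
  -- Step 3: assemble the two inclusions.
  ext u
  constructor
  · rintro ⟨⟨u', z⟩, ⟨hfeas, hmin⟩, rfl⟩
    refine ⟨hBA _ hfeas, ?_⟩
    intro v hv
    obtain ⟨zv, hzv⟩ := hAB v hv
    exact hmin (v, zv) hzv
  · rintro ⟨huA, hmin⟩
    obtain ⟨z, hz⟩ := hAB u huA
    exact ⟨(u, z), ⟨hz, fun vz hvz => hmin vz.1 (hBA vz hvz)⟩, rfl⟩
end

section
/- Let μ > 0 and ε > 0, let f : ℝ^m → ℝ be μ-strongly convex, and let C ⊆ ℝ^m × ℝ^q be a convex set. Suppose (u*, z*) ∈ C satisfies f(u*) ≤ f(u) for every (u, z) ∈ C, and suppose (u_ε, z_ε) ∈ C minimizes the function (u, z) ↦ f(u) + ε‖z‖² over C. Then (μ/2)‖u_ε − u*‖² ≤ ε‖z*‖²; in particular ‖u_ε − u*‖ ≤ √(2ε/μ) · ‖z*‖. -/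
/-- Sensitivity of the regularized decoupled problem: if `(u*, z*) ∈ C`
minimizes `f` in the `u`-component over the convex set `C` and `(u_ε, z_ε)`
minimizes the regularized objective `(u,z) ↦ f u + ε‖z‖²` over `C`, with `f`
`μ`-strongly convex, then `(μ/2)‖u_ε − u*‖² ≤ ε‖z*‖²`, and in particular
`‖u_ε − u*‖ ≤ √(2ε/μ)·‖z*‖`. -/
theorem regularized_optimizer_close_to_optimizer {m q : ℕ} (μ ε : ℝ)
    (hμ : 0 < μ) (hε : 0 < ε) (f : EuclideanSpace ℝ (Fin m) → ℝ)
    (hf : ConvexOn ℝ Set.univ (fun u => f u - μ / 2 * ‖u‖ ^ 2))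
    (C : Set (EuclideanSpace ℝ (Fin m) × EuclideanSpace ℝ (Fin q)))
    (hC : Convex ℝ C)
    (ustar : EuclideanSpace ℝ (Fin m)) (zstar : EuclideanSpace ℝ (Fin q))
    (hstar : (ustar, zstar) ∈ C)
    (hstarmin : ∀ uz ∈ C, f ustar ≤ f uz.1)
    (uε : EuclideanSpace ℝ (Fin m)) (zε : EuclideanSpace ℝ (Fin q))
    (hε' : (uε, zε) ∈ C)
    (hεmin : ∀ uz ∈ C, f uε + ε * ‖zε‖ ^ 2 ≤ f uz.1 + ε * ‖uz.2‖ ^ 2) :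
    μ / 2 * ‖uε - ustar‖ ^ 2 ≤ ε * ‖zstar‖ ^ 2 ∧
      ‖uε - ustar‖ ≤ Real.sqrt (2 * ε / μ) * ‖zstar‖ := by
  set d : ℝ := ‖uε - ustar‖ with hd
  have hd0 : 0 ≤ d := norm_nonneg _
  have key : ∀ t : ℝ, 0 < t → t < 1 →
      μ / 2 * (1 - t) * d ^ 2 ≤ f uε - f ustar := by
    intro t ht0 ht1
    have ht1' : (0:ℝ) ≤ 1 - t := by linarith
    have hmem : ((1 - t) • ((ustar, zstar) : _ × _) + t • (uε, zε)) ∈ C :=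
      hC hstar hε' ht1' ht0.le (by ring)
    have h1 : f ustar ≤ f ((1 - t) • ustar + t • uε) := by
      have := hstarmin _ hmem
      simpa using this
    have h2 := hf.2 (Set.mem_univ ustar) (Set.mem_univ uε) ht1' ht0.le (by ring)
    simp only [smul_eq_mul] at h2
    have hnorm : ‖(1 - t) • ustar + t • uε‖ ^ 2
        = (1 - t) * ‖ustar‖ ^ 2 + t * ‖uε‖ ^ 2 - t * (1 - t) * d ^ 2 := by
      have e1 : ‖(1 - t) • ustar + t • uε‖ ^ 2
          = ‖(1 - t) • ustar‖ ^ 2 + 2 * inner ℝ ((1 - t) • ustar) (t • uε) +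
            ‖t • uε‖ ^ 2 := by
        rw [← norm_add_sq_real]
      have e2 : d ^ 2 = ‖uε‖ ^ 2 - 2 * inner ℝ uε ustar + ‖ustar‖ ^ 2 := by
        rw [hd, ← norm_sub_sq_real]
      rw [real_inner_comm] at e2
      rw [e1, norm_smul, norm_smul, real_inner_smul_left, real_inner_smul_right,
        Real.norm_eq_abs, Real.norm_eq_abs, abs_of_nonneg ht1', abs_of_nonneg ht0.le, e2]
      ring
    nlinarith [h1, h2, hnorm]
  have hlb : μ / 2 * d ^ 2 ≤ f uε - f ustar := by
    have hdiff0 : 0 ≤ f uε - f ustar := by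
      have := hstarmin (uε, zε) hε'
      simpa using sub_nonneg.mpr this
    refine le_of_forall_pos_le_add fun η hη => ?_
    rcases eq_or_lt_of_le (sq_nonneg d) with hsq | hsq
    · rw [← hsq]; linarith
    · have hc : 0 < μ / 2 * d ^ 2 := by positivity
      set t : ℝ := min (η / (μ / 2 * d ^ 2)) (1 / 2) with ht
      have ht0 : 0 < t := lt_min (by positivity) (by norm_num)
      have ht1 : t < 1 := lt_of_le_of_lt (min_le_right _ _) (by norm_num)
      have hk := key t ht0 ht1
      have htle : t * (μ / 2 * d ^ 2) ≤ η := by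
        have : t ≤ η / (μ / 2 * d ^ 2) := min_le_left _ _
        calc t * (μ / 2 * d ^ 2) ≤ η / (μ / 2 * d ^ 2) * (μ / 2 * d ^ 2) := by
              exact mul_le_mul_of_nonneg_right this hc.le
          _ = η := div_mul_cancel₀ _ hc.ne'
      nlinarith
  have hub : f uε ≤ f ustar + ε * ‖zstar‖ ^ 2 := by
    have := hεmin (ustar, zstar) hstar
    have hz : 0 ≤ ε * ‖zε‖ ^ 2 := by positivity
    simp only at this
    linarith
  have h1 : μ / 2 * d ^ 2 ≤ ε * ‖zstar‖ ^ 2 := by linarith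
  refine ⟨h1, ?_⟩
  have hdsq : d ^ 2 ≤ 2 * ε / μ * ‖zstar‖ ^ 2 := by
    rw [div_mul_eq_mul_div, le_div_iff₀ hμ]
    nlinarith
  calc d = Real.sqrt (d ^ 2) := by rw [Real.sqrt_sq hd0]
    _ ≤ Real.sqrt (2 * ε / μ * ‖zstar‖ ^ 2) := Real.sqrt_le_sqrt hdsq
    _ = Real.sqrt (2 * ε / μ) * ‖zstar‖ := by
        rw [Real.sqrt_mul (by positivity), Real.sqrt_sq (norm_nonneg _)]
end

section
/- Let μ > 0, Z > 0 and δ > 0, let K be any index set, and for each ξ ∈ K let C(ξ) ⊆ ℝ^m × ℝ^q be a convex set and f(ξ, ·) : ℝ^m → ℝ be μ-strongly convex. Suppose for each ξ ∈ K there are (u*(ξ), z*(ξ)) ∈ C(ξ) with f(ξ, u*(ξ)) ≤ f(ξ, u) for all (u, z) ∈ C(ξ) and with ‖z*(ξ)‖ ≤ Z, and suppose for each ε > 0 and ξ ∈ K the pair (u_ε(ξ), z_ε(ξ)) ∈ C(ξ) minimizes (u, z) ↦ f(ξ, u) + ε‖z‖² over C(ξ). Then for every ε with 0 < ε < μδ²/(2Z²),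 one has ‖u_ε(ξ) − u*(ξ)‖ ≤ δ for all ξ ∈ K. -/
lemma combo_norm_sq {E : Type*} [NormedAddCommGroup E] [InnerProductSpace ℝ E]
    (a b : E) (t : ℝ) :
    ‖t • a + (1 - t) • b‖ ^ 2
      = t * ‖a‖ ^ 2 + (1 - t) * ‖b‖ ^ 2 - t * (1 - t) * ‖a - b‖ ^ 2 := by
  have h : ∀ x : E, ‖x‖ ^ 2 = inner ℝ x x := fun x =>
    (real_inner_self_eq_norm_sq x).symm
  rw [h, h, h, h]
  simp only [inner_add_left, inner_add_right, inner_sub_left, inner_sub_right,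
    real_inner_smul_left, real_inner_smul_right, real_inner_comm a b]
  ring

/-- Uniform sensitivity of the regularized problem: over a family of states
`ξ ∈ K` with `μ`-strongly convex objectives `f ξ`, convex feasible sets `C ξ`,
minimizers `(u* ξ, z* ξ)` with `‖z* ξ‖ ≤ Z`, and regularized minimizers
`(u_ε ξ, z_ε ξ)`, every `ε` with `0 < ε < μδ²/(2Z²)` gives
`‖u_ε ξ − u* ξ‖ ≤ δ` uniformly on `K`. -/
theorem uniform_sensitivity_regularized {m q : ℕ} {K : Type*}
    (μ Z δ : ℝ) (hμ : 0 < μ) (hZ : 0 < Z) (hδ : 0 < δ)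
    (C : K → Set (EuclideanSpace ℝ (Fin m) × EuclideanSpace ℝ (Fin q)))
    (hC : ∀ ξ, Convex ℝ (C ξ))
    (f : K → EuclideanSpace ℝ (Fin m) → ℝ)
    (hf : ∀ ξ, ConvexOn ℝ Set.univ (fun u => f ξ u - μ / 2 * ‖u‖ ^ 2))
    (ustar : K → EuclideanSpace ℝ (Fin m))
    (zstar : K → EuclideanSpace ℝ (Fin q))
    (hstar : ∀ ξ, (ustar ξ, zstar ξ) ∈ C ξ)
    (hstarmin : ∀ ξ, ∀ uz ∈ C ξ, f ξ (ustar ξ) ≤ f ξ uz.1)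
    (hzbound : ∀ ξ, ‖zstar ξ‖ ≤ Z)
    (uε : ℝ → K → EuclideanSpace ℝ (Fin m))
    (zε : ℝ → K → EuclideanSpace ℝ (Fin q))
    (hεfeas : ∀ ε > 0, ∀ ξ, (uε ε ξ, zε ε ξ) ∈ C ξ)
    (hεmin : ∀ ε > 0, ∀ ξ, ∀ uz ∈ C ξ,
      f ξ (uε ε ξ) + ε * ‖zε ε ξ‖ ^ 2 ≤ f ξ uz.1 + ε * ‖uz.2‖ ^ 2) :
    ∀ ε, 0 < ε → ε < μ * δ ^ 2 / (2 * Z ^ 2) →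
      ∀ ξ, ‖uε ε ξ - ustar ξ‖ ≤ δ := by
  intro ε hε hεδ ξ
  by_contra hcon
  push_neg at hcon
  set a := uε ε ξ
  set b := ustar ξ
  set d := ‖a - b‖ with hd
  have hdpos : 0 < d := lt_trans hδ hcon
  have hd2 : δ ^ 2 < d ^ 2 := by nlinarith
  set t : ℝ := 1 - δ ^ 2 / d ^ 2 with ht_def
  have hd2pos : 0 < d ^ 2 := by positivity
  have ht0 : 0 < t := by
    have : δ ^ 2 / d ^ 2 < 1 := (div_lt_one hd2pos).2 hd2
    rw [ht_def]; linarith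
  have ht1 : t < 1 := by
    have : 0 < δ ^ 2 / d ^ 2 := by positivity
    rw [ht_def]; linarith
  have h1t : (0:ℝ) < 1 - t := by linarith
  -- the combination point is feasible
  have hmem : t • ((a, zε ε ξ) : _ × _) + (1 - t) • (b, zstar ξ) ∈ C ξ :=
    hC ξ (hεfeas ε hε ξ) (hstar ξ) ht0.le h1t.le (by ring)
  -- f b ≤ f at combination (first component)
  have hfle : f ξ b ≤ f ξ (t • a + (1 - t) • b) := by
    have := hstarmin ξ _ hmem
    simpa using this
  -- convexity inequality
  have hconv := (hf ξ).2 (Set.mem_univ a) (Set.mem_univ b) ht0.le h1t.le (by ring)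
  simp only [smul_eq_mul] at hconv
  have hcombo := combo_norm_sq a b t
  have hkey : μ / 2 * (1 - t) * d ^ 2 ≤ f ξ a - f ξ b := by
    have h1 : f ξ (t • a + (1 - t) • b) - μ / 2 * ‖t • a + (1 - t) • b‖ ^ 2
        ≤ t * (f ξ a - μ / 2 * ‖a‖ ^ 2) + (1 - t) * (f ξ b - μ / 2 * ‖b‖ ^ 2) := hconv
    rw [hcombo] at h1
    have h2 : f ξ b ≤ t * f ξ a + (1 - t) * f ξ b - μ / 2 * (t * (1 - t) * d ^ 2) := by
      linarith [h1, hfle]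
    have h3 : t * (μ / 2 * (1 - t) * d ^ 2) ≤ t * (f ξ a - f ξ b) := by nlinarith [h2]
    exact le_of_mul_le_mul_left (by linarith [h3]) ht0
  have h1td : (1 - t) * d ^ 2 = δ ^ 2 := by
    rw [ht_def]; field_simp; ring
  rw [mul_assoc] at hkey
  rw [h1td] at hkey
  -- upper bound from regularized minimality
  have hup : f ξ a - f ξ b ≤ ε * Z ^ 2 := by
    have hmin := hεmin ε hε ξ _ (hstar ξ)
    simp only at hmin
    have hz : ‖zstar ξ‖ ^ 2 ≤ Z ^ 2 :=
      pow_le_pow_left₀ (norm_nonneg _) (hzbound ξ) 2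
    have h4 : ε * ‖zstar ξ‖ ^ 2 ≤ ε * Z ^ 2 :=
      mul_le_mul_of_nonneg_left hz hε.le
    have h5 : 0 ≤ ε * ‖zε ε ξ‖ ^ 2 := by positivity
    linarith
  have hεZ : ε * Z ^ 2 < μ / 2 * δ ^ 2 := by
    have h2Z : (0:ℝ) < 2 * Z ^ 2 := by positivity
    have := (lt_div_iff₀ h2Z).mp hεδ
    nlinarith
  linarith
end
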